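/- Let R → S be a module-finite ring homomorphism where R is Artinian and reduced, S is reduced, and all residue field extensions κ(Q ∩ R) → κ(Q) (for Q ∈ Spec(S)) are finite separable. Then R → S is étale (flat, of finite presentation, with Ω_{S/R} = 0). -/

import Mathlib

open TensorProduct

/-- Every module over a semisimple ring is flat. -/
theorem flat_of_isSemisimpleRing (R M : Type*) [CommRing R] [IsSemisimpleRing R]
    [AddCommGroup M] [Module R M] : Module.Flat R M := by
  have : Module.Projective R M := by
    let f : (M →₀ R) →ₗ[R] M := Finsupp.linearCombination R _root_.id
    have hf : Function.Surjective f := fun x => ⟨Finsupp.single x 1, by simp [f]⟩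
    obtain ⟨K, hK⟩ := exists_isCompl (LinearMap.ker f)
    let e : M ≃ₗ[R] K :=
      (LinearMap.quotKerEquivOfSurjective f hf).symm.trans
        (Submodule.quotientEquivOfIsCompl _ K hK)
    refine Module.Projective.of_split (K.subtype ∘ₗ e.toLinearMap)
      (e.symm.toLinearMap ∘ₗ Submodule.projectionOnto K (LinearMap.ker f) hK.symm) ?_
    ext x
    simp [Submodule.projectionOnto_apply_left]
  infer_instance

/-- Cross-universe version of `Algebra.FormallyUnramified.of_isSeparable`. -/
theorem formallyUnramified_of_isSeparable (K L : Type*) [Field K] [Field L] [Algebra K L]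
    [Algebra.IsSeparable K L] : Algebra.FormallyUnramified K L := by
  rw [Algebra.FormallyUnramified.iff_comp_injective]
  intros B _ _ I hI f₁ f₂ e
  ext x
  have : f₁ x - f₂ x ∈ I := by
    simpa [Ideal.Quotient.mk_eq_mk_iff_sub_mem] using AlgHom.congr_fun e x
  have := Polynomial.eval_add_of_sq_eq_zero ((minpoly K x).map (algebraMap K B)) (f₂ x)
    (f₁ x - f₂ x) (show (f₁ x - f₂ x) ^ 2 ∈ ⊥ from hI ▸ Ideal.pow_mem_pow this 2)
  simp only [add_sub_cancel, Polynomial.eval_map_algebraMap, Polynomial.aeval_algHom_apply,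
    minpoly.aeval, map_zero, Polynomial.derivative_map, zero_add] at this
  rwa [eq_comm, ((isUnit_iff_ne_zero.mpr
    ((Algebra.IsSeparable.isSeparable K x).aeval_derivative_ne_zero
      (minpoly.aeval K x))).map f₂).mul_right_eq_zero, sub_eq_zero] at this

/-- If `Q` is an idempotent ideal with `S ⧸ Q` formally unramified over `R`, then
`Q • Ω[S⁄R] = Ω[S⁄R]`. -/
theorem aux_smul_top (R S : Type*) [CommRing R] [CommRing S] [Algebra R S]
    (Q : Ideal S) (hQ2 : Q * Q = Q)
    [Algebra.FormallyUnramified R (S ⧸ Q)] :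
    Q • (⊤ : Submodule S (Ω[S⁄R])) = ⊤ := by
  have hsurj : Function.Surjective (algebraMap S (S ⧸ Q)) := by
    rw [Ideal.Quotient.algebraMap_eq]; exact Ideal.Quotient.mk_surjective
  have hzero : ∀ q ∈ Q, ((1 : S ⧸ Q) ⊗ₜ[S] (KaehlerDifferential.D R S q)
      : (S ⧸ Q) ⊗[S] (Ω[S⁄R])) = 0 := by
    intro q hq
    rw [← hQ2] at hq
    refine Submodule.mul_induction_on hq ?_ ?_
    · intro m hm n hn
      have h1 : ∀ x ∈ Q, ∀ y : Ω[S⁄R],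
          ((1 : S ⧸ Q) ⊗ₜ[S] (x • y) : (S ⧸ Q) ⊗[S] (Ω[S⁄R])) = 0 := by
        intro x hx y
        have : x • (1 : S ⧸ Q) = 0 := by
          rw [← Algebra.algebraMap_eq_smul_one, Ideal.Quotient.algebraMap_eq,
            Ideal.Quotient.eq_zero_iff_mem]
          exact hx
        rw [TensorProduct.tmul_smul, TensorProduct.smul_tmul', this,
          TensorProduct.zero_tmul]
      rw [Derivation.leibniz, TensorProduct.tmul_add, h1 m hm _, h1 n hn _, add_zero]
    · intro x y hx hy
      rw [map_add, TensorProduct.tmul_add, hx, hy, add_zero]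
  have hall : ∀ x : (S ⧸ Q) ⊗[S] (Ω[S⁄R]), x = 0 := by
    intro x
    have hx : x ∈ LinearMap.range (KaehlerDifferential.kerCotangentToTensor R S (S ⧸ Q)) := by
      rw [KaehlerDifferential.range_kerCotangentToTensor R S (S ⧸ Q) hsurj]
      simp only [Submodule.restrictScalars_mem, LinearMap.mem_ker]
      exact Subsingleton.elim _ _
    obtain ⟨y, rfl⟩ := hx
    obtain ⟨z, rfl⟩ := Ideal.toCotangent_surjective _ y
    rw [KaehlerDifferential.kerCotangentToTensor_toCotangent]
    refine hzero z.1 (Ideal.Quotient.eq_zero_iff_mem.mp ?_)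
    rw [← Ideal.Quotient.algebraMap_eq]
    exact z.2
  haveI : Subsingleton ((S ⧸ Q) ⊗[S] (Ω[S⁄R])) := subsingleton_of_forall_eq 0 hall
  haveI : Subsingleton ((Ω[S⁄R]) ⧸ (Q • ⊤ : Submodule S (Ω[S⁄R]))) :=
    (TensorProduct.quotTensorEquivQuotSMul (Ω[S⁄R]) Q).symm.toEquiv.subsingleton
  exact Submodule.Quotient.subsingleton_iff.mp this

theorem aux_prod_smul (S : Type*) [CommRing S] {M : Type*} [AddCommGroup M] [Module S M]
    (t : Finset (Ideal S)) (h : ∀ Q ∈ t, Q • (⊤ : Submodule S M) = ⊤) :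
    (∏ Q ∈ t, Q) • (⊤ : Submodule S M) = ⊤ := by
  classical
  induction t using Finset.cons_induction with
  | empty => rw [Finset.prod_empty, Ideal.one_eq_top, Submodule.top_smul]
  | cons a s ha ih =>
    rw [Finset.prod_cons, mul_smul, ih (fun Q hQ => h Q (Finset.mem_cons_of_mem hQ)),
      h a (Finset.mem_cons_self a s)]

/-- A module-finite map of reduced rings with `R` Artinian reduced and finite separable
residue field extensions is étale. -/
theorem etale_of_artinian_reduced
    (R S : Type*) [CommRing R] [CommRing S] [Algebra R S]
    [IsArtinianRing R] [IsReduced R] [IsReduced S] [Module.Finite R S]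
    (hres : ∀ (Q : Ideal S) (hQ : Q.IsPrime),
      haveI := hQ
      haveI := Localization.isLocalHom_localRingHom (Q.comap (algebraMap R S)) Q
        (algebraMap R S) rfl
      letI : Algebra
          (IsLocalRing.ResidueField (Localization.AtPrime (Q.comap (algebraMap R S))))
          (IsLocalRing.ResidueField (Localization.AtPrime Q)) :=
        (IsLocalRing.ResidueField.map
          (Localization.localRingHom (Q.comap (algebraMap R S)) Q (algebraMap R S) rfl)).toAlgebra
      Module.Finite
          (IsLocalRing.ResidueField (Localization.AtPrime (Q.comap (algebraMap R S))))
          (IsLocalRing.ResidueField (Localization.AtPrime Q)) ∧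
        Algebra.IsSeparable
          (IsLocalRing.ResidueField (Localization.AtPrime (Q.comap (algebraMap R S))))
          (IsLocalRing.ResidueField (Localization.AtPrime Q))) :
    Module.Flat R S ∧ Algebra.FinitePresentation R S ∧ Subsingleton (Ω[S⁄R]) := by
  haveI : IsSemisimpleRing R := IsArtinianRing.isSemisimpleRing_of_isReduced (R := R)
  haveI : IsNoetherianRing R := inferInstance
  haveI : IsArtinianRing S := IsArtinianRing.of_finite R S
  haveI : IsSemisimpleRing S := IsArtinianRing.isSemisimpleRing_of_isReduced (R := S)
  refine ⟨flat_of_isSemisimpleRing R S, ?_, ?_⟩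
  · exact (Algebra.FinitePresentation.of_finiteType).mp inferInstance
  · -- The Kähler differentials vanish.
    have htop : ∀ (Q : Ideal S), Q.IsPrime → Q • (⊤ : Submodule S (Ω[S⁄R])) = ⊤ := by
      intro Q hQ
      haveI := hQ
      haveI hQm : Q.IsMaximal := IsArtinianRing.isMaximal_of_isPrime Q
      haveI hPp : (Q.comap (algebraMap R S)).IsPrime := hQ.comap _
      haveI hPm : (Q.comap (algebraMap R S)).IsMaximal := IsArtinianRing.isMaximal_of_isPrime _
      letI : Field (R ⧸ Q.comap (algebraMap R S)) := Ideal.Quotient.field _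
      letI : Field (S ⧸ Q) := Ideal.Quotient.field _
      haveI := Localization.isLocalHom_localRingHom (Q.comap (algebraMap R S)) Q
        (algebraMap R S) rfl
      letI : Algebra
          (IsLocalRing.ResidueField (Localization.AtPrime (Q.comap (algebraMap R S))))
          (IsLocalRing.ResidueField (Localization.AtPrime Q)) :=
        (IsLocalRing.ResidueField.map
          (Localization.localRingHom (Q.comap (algebraMap R S)) Q (algebraMap R S) rfl)).toAlgebra
      haveI hsep := (hres Q hQ).2
      -- the composite maps to the residue fields
      have hkerR : ∀ r ∈ Q.comap (algebraMap R S),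
          ((IsLocalRing.residue (Localization.AtPrime (Q.comap (algebraMap R S)))).comp
            (algebraMap R (Localization.AtPrime (Q.comap (algebraMap R S))))) r = 0 := by
        intro r hr
        simp only [RingHom.comp_apply, IsLocalRing.residue_eq_zero_iff]
        exact (IsLocalization.AtPrime.to_map_mem_maximal_iff _ _ r).mpr hr
      have hkerS : ∀ s ∈ Q,
          ((IsLocalRing.residue (Localization.AtPrime Q)).comp
            (algebraMap S (Localization.AtPrime Q))) s = 0 := by
        intro s hs
        simp only [RingHom.comp_apply, IsLocalRing.residue_eq_zero_iff]
        exact (IsLocalization.AtPrime.to_map_mem_maximal_iff _ _ s).mpr hs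
      have hsurjR : Function.Surjective
          ((IsLocalRing.residue (Localization.AtPrime (Q.comap (algebraMap R S)))).comp
            (algebraMap R (Localization.AtPrime (Q.comap (algebraMap R S))))) :=
        (IsLocalRing.residue_surjective).comp
          (IsArtinianRing.localization_surjective (Q.comap (algebraMap R S)).primeCompl _)
      have hsurjS : Function.Surjective
          ((IsLocalRing.residue (Localization.AtPrime Q)).comp
            (algebraMap S (Localization.AtPrime Q))) :=
        (IsLocalRing.residue_surjective).comp
          (IsArtinianRing.localization_surjective Q.primeCompl _)
      -- ring isomorphisms between quotients and residue fields
      let φR := Ideal.Quotient.lift (Q.comap (algebraMap R S)) _ hkerR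
      let φS := Ideal.Quotient.lift Q _ hkerS
      have hφRsurj : Function.Surjective φR := by
        intro x
        obtain ⟨r, hr⟩ := hsurjR x
        exact ⟨Ideal.Quotient.mk _ r, by rw [Ideal.Quotient.lift_mk]; exact hr⟩
      have hφSsurj : Function.Surjective φS := by
        intro x
        obtain ⟨s, hs⟩ := hsurjS x
        exact ⟨Ideal.Quotient.mk _ s, by rw [Ideal.Quotient.lift_mk]; exact hs⟩
      let eR := RingEquiv.ofBijective φR ⟨φR.injective, hφRsurj⟩
      let eS := RingEquiv.ofBijective φS ⟨φS.injective, hφSsurj⟩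
      letI : Algebra (R ⧸ Q.comap (algebraMap R S)) (S ⧸ Q) :=
        (Ideal.quotientMap Q (algebraMap R S) le_rfl).toAlgebra
      have he : (algebraMap (R ⧸ Q.comap (algebraMap R S)) (S ⧸ Q)).comp
            (eR.symm : _ →+* _)
          = (eS.symm : _ →+* _).comp
            (algebraMap (IsLocalRing.ResidueField (Localization.AtPrime (Q.comap (algebraMap R S))))
              (IsLocalRing.ResidueField (Localization.AtPrime Q))) := by
        refine RingHom.ext fun x => ?_
        obtain ⟨r, rfl⟩ := hsurjR x
        have h1 : eR.symm (((IsLocalRing.residue _).comp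
            (algebraMap R (Localization.AtPrime (Q.comap (algebraMap R S))))) r)
            = Ideal.Quotient.mk _ r := by
          apply eR.injective
          rw [RingEquiv.apply_symm_apply]
          exact (Ideal.Quotient.lift_mk (Q.comap (algebraMap R S)) _ hkerR).symm
        have h2 : (algebraMap
              (IsLocalRing.ResidueField (Localization.AtPrime (Q.comap (algebraMap R S))))
              (IsLocalRing.ResidueField (Localization.AtPrime Q)))
              (((IsLocalRing.residue _).comp
                (algebraMap R (Localization.AtPrime (Q.comap (algebraMap R S))))) r)
            = ((IsLocalRing.residue (Localization.AtPrime Q)).comp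
                (algebraMap S (Localization.AtPrime Q))) (algebraMap R S r) := by
          rw [RingHom.algebraMap_toAlgebra]
          simp only [RingHom.comp_apply]
          rw [IsLocalRing.ResidueField.map_residue, Localization.localRingHom_to_map]
        have h3 : eS.symm (((IsLocalRing.residue (Localization.AtPrime Q)).comp
            (algebraMap S (Localization.AtPrime Q))) (algebraMap R S r))
            = Ideal.Quotient.mk _ (algebraMap R S r) := by
          apply eS.injective
          rw [RingEquiv.apply_symm_apply]
          exact (Ideal.Quotient.lift_mk Q _ hkerS).symm
        simp only [RingHom.comp_apply, RingHom.coe_coe] at h1 h2 h3 ⊢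
        rw [h1, h2, h3, RingHom.algebraMap_toAlgebra, Ideal.quotientMap_mk]
      haveI : Algebra.IsSeparable (R ⧸ Q.comap (algebraMap R S)) (S ⧸ Q) :=
        Algebra.IsSeparable.of_equiv_equiv eR.symm eS.symm he
      haveI : Algebra.FormallyUnramified (R ⧸ Q.comap (algebraMap R S)) (S ⧸ Q) :=
        formallyUnramified_of_isSeparable _ _
      haveI : IsScalarTower R (R ⧸ Q.comap (algebraMap R S)) (S ⧸ Q) := by
        refine IsScalarTower.of_algebraMap_eq' ?_
        rw [RingHom.algebraMap_toAlgebra, IsScalarTower.algebraMap_eq R S (S ⧸ Q),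
          Ideal.Quotient.algebraMap_eq, Ideal.Quotient.algebraMap_eq]
        ext r
        simp [Ideal.quotientMap_mk]
      haveI : Algebra.FormallyUnramified R (S ⧸ Q) :=
        Algebra.FormallyUnramified.comp R (R ⧸ Q.comap (algebraMap R S)) (S ⧸ Q)
      -- Q is idempotent
      have hQ2 : Q * Q = Q := by
        obtain ⟨e, he', hspan⟩ := IsSemisimpleRing.ideal_eq_span_idempotent Q
        rw [hspan, Ideal.span_singleton_mul_span_singleton, he'.eq]
      exact aux_smul_top R S Q hQ2
    rcases subsingleton_or_nontrivial S with hS | hS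
    · exact Module.subsingleton S _
    · classical
      have fin := IsArtinianRing.setOfPred_isMaximal_finite S
      have key : (⊤ : Submodule S (Ω[S⁄R])) = ⊥ := by
        refine Submodule.eq_bot_of_le_smul_of_le_jacobson_bot (∏ Q ∈ fin.toFinset, Q) ⊤
          Module.Finite.fg_top ?_ ?_
        · rw [aux_prod_smul S _ (fun Q hQ => htop Q
            ((fin.mem_toFinset.mp hQ).isPrime))]
        · refine le_sInf ?_
          rintro J ⟨-, hJ⟩
          exact le_trans Ideal.prod_le_inf (Finset.inf_le (fin.mem_toFinset.mpr hJ))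
      refine subsingleton_of_forall_eq 0 fun x => ?_
      have hx : x ∈ (⊥ : Submodule S (Ω[S⁄R])) := key ▸ Submodule.mem_top
      simpa using hx
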